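/- Let κ > 0, μ ≥ 1, τ_d > 0. Let t : ℕ → ℝ be a sequence with t(0) = 0 and t(i+1) − t(i) ≥ τ_d for all i ∈ ℕ. Let a : ℕ → [0,∞) satisfy a(i+1) ≤ μ·e^{-κ(t(i+1) − t(i))}·a(i) for all i. Let W : [0,∞) → [0,∞) be a function such that for every i ∈ ℕ and every s ∈ [t(i), t(i+1)], W(s) ≤ a(i)·e^{-κ(s − t(i))}. Then for every i ∈ ℕ and every s ∈ [t(i), t(i+1)], W(s) ≤ e^{((log μ)/τ_d − κ)·s}·a(0). -/
import Mathlib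


/-- Stability under dwell-time switching: if the switching times satisfy
`t (i+1) − t i ≥ τ_d`, the Lyapunov sequence `a` decays with jump factor `μ`,
and `W` decays exponentially within each mode, then
`W s ≤ e^{((log μ)/τ_d − κ)·s}·a 0` on each interval `[t i, t (i+1)]`. -/
theorem stmt_4 (κ μ τd : ℝ) (hκ : 0 < κ) (hμ : 1 ≤ μ) (hτd : 0 < τd)
    (t : ℕ → ℝ) (ht0 : t 0 = 0) (hdwell : ∀ i, τd ≤ t (i + 1) - t i)
    (a : ℕ → ℝ) (ha : ∀ i, 0 ≤ a i)
    (hrec : ∀ i, a (i + 1) ≤ μ * Real.exp (-κ * (t (i + 1) - t i)) * a i)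
    (W : ℝ → ℝ) (hWnonneg : ∀ s : ℝ, 0 ≤ s → 0 ≤ W s)
    (hW : ∀ i, ∀ s ∈ Set.Icc (t i) (t (i + 1)),
      W s ≤ a i * Real.exp (-κ * (s - t i))) :
    ∀ i, ∀ s ∈ Set.Icc (t i) (t (i + 1)),
      W s ≤ Real.exp ((Real.log μ / τd - κ) * s) * a 0 := by
  have hμ0 : 0 < μ := lt_of_lt_of_le one_pos hμ
  -- a i ≤ μ^i * exp(-κ * t i) * a 0
  have key : ∀ i, a i ≤ μ ^ i * Real.exp (-κ * t i) * a 0 := by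
    intro i
    induction i with
    | zero => simp [ht0]
    | succ n ih =>
      calc a (n + 1) ≤ μ * Real.exp (-κ * (t (n + 1) - t n)) * a n := hrec n
        _ ≤ μ * Real.exp (-κ * (t (n + 1) - t n)) *
              (μ ^ n * Real.exp (-κ * t n) * a 0) := by
            apply mul_le_mul_of_nonneg_left ih
            positivity
        _ = μ ^ (n + 1) * Real.exp (-κ * t (n + 1)) * a 0 := by
            rw [show -κ * t (n + 1) = -κ * (t (n + 1) - t n) + -κ * t n by ring,
              Real.exp_add]
            ring
  -- i * τd ≤ t i
  have htlb : ∀ i : ℕ, (i : ℝ) * τd ≤ t i := by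
    intro i
    induction i with
    | zero => simp [ht0]
    | succ n ih =>
      have := hdwell n
      push_cast
      linarith
  intro i s hs
  have hti : (i : ℝ) * τd ≤ t i := htlb i
  have hs0 : 0 ≤ s := le_trans (by positivity : (0:ℝ) ≤ (i:ℝ) * τd) (le_trans hti hs.1)
  calc W s ≤ a i * Real.exp (-κ * (s - t i)) := hW i s hs
    _ ≤ μ ^ i * Real.exp (-κ * t i) * a 0 * Real.exp (-κ * (s - t i)) := by
        apply mul_le_mul_of_nonneg_right (key i) (Real.exp_nonneg _)
    _ = μ ^ i * Real.exp (-κ * s) * a 0 := by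
        rw [mul_right_comm, mul_assoc (μ ^ i), ← Real.exp_add]
        ring_nf
    _ ≤ Real.exp ((Real.log μ / τd - κ) * s) * a 0 := by
        apply mul_le_mul_of_nonneg_right _ (ha 0)
        have hlog : 0 ≤ Real.log μ := Real.log_nonneg hμ
        have hits : (i : ℝ) * τd ≤ s := le_trans hti hs.1
        have h1 : (i : ℝ) * Real.log μ ≤ Real.log μ / τd * s := by
          rw [div_mul_eq_mul_div, le_div_iff₀ hτd]
          nlinarith
        have hμi : μ ^ i = Real.exp (i * Real.log μ) := by
          rw [Real.exp_nat_mul, Real.exp_log hμ0]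
        rw [hμi, ← Real.exp_add]
        exact Real.exp_le_exp.2 (by rw [sub_mul]; linarith)
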